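/- Let H, G be real Hilbert spaces, f ∈ Γ₀(G), and L : H → G a bounded linear operator with L ∘ L* = ν·Id for some ν > 0. Then f ∘ L ∈ Γ₀(H) and prox_{f∘L} = Id + ν⁻¹ L* ∘ (prox_{νf} − Id) ∘ L. -/

import Mathlib

open Set RealInnerProductSpace

/-- If `L ∘ L* = ν Id` with `ν > 0` and `f ∈ Γ₀(G)`, then `f ∘ L ∈ Γ₀(H)` and
`prox_{f∘L} = Id + ν⁻¹ L* ∘ (prox_{νf} − Id) ∘ L`. -/
theorem stmt_8 {H G : Type*} [NormedAddCommGroup H] [InnerProductSpace ℝ H]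
    [CompleteSpace H] [NormedAddCommGroup G] [InnerProductSpace ℝ G] [CompleteSpace G]
    (f : G → ℝ) (hf_conv : ConvexOn ℝ univ f) (hf_lsc : LowerSemicontinuous f)
    (L : H →L[ℝ] G) (ν : ℝ) (hν : 0 < ν)
    (hL : ∀ u : G, L (L.adjoint u) = ν • u) :
    (ConvexOn ℝ univ (fun x => f (L x)) ∧ LowerSemicontinuous (fun x => f (L x))) ∧
    ∀ x : H, ∀ p : G,
      IsMinOn (fun u => (1/2) * ‖u - L x‖^2 + ν * f u) univ p →
      IsMinOn (fun y => (1/2) * ‖y - x‖^2 + f (L y)) univ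
        (x + ν⁻¹ • L.adjoint (p - L x)) := by
  have hadj : ∀ u : G, ‖L.adjoint u‖ ^ 2 = ν * ‖u‖ ^ 2 := by
    intro u
    rw [← real_inner_self_eq_norm_sq, ← real_inner_self_eq_norm_sq,
      ContinuousLinearMap.adjoint_inner_left, hL, real_inner_smul_right]
  have hLle : ∀ z : H, ‖L z‖ ^ 2 ≤ ν * ‖z‖ ^ 2 := by
    intro z
    have h1 : ‖L z‖ ^ 2 = ⟪L.adjoint (L z), z⟫ := by
      rw [ContinuousLinearMap.adjoint_inner_left, real_inner_self_eq_norm_sq]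
    have h2 : ⟪L.adjoint (L z), z⟫ ≤ ‖L.adjoint (L z)‖ * ‖z‖ := real_inner_le_norm _ _
    have h3 : ‖L.adjoint (L z)‖ ^ 2 = ν * ‖L z‖ ^ 2 := hadj _
    have h0 : (0:ℝ) ≤ ‖L z‖ ^ 2 := sq_nonneg _
    have h4 : (‖L z‖ ^ 2) ^ 2 ≤ (‖L.adjoint (L z)‖ * ‖z‖) ^ 2 := by
      apply pow_le_pow_left₀ h0 (h1.le.trans h2)
    have h5 : (‖L z‖ ^ 2) ^ 2 ≤ ν * ‖L z‖ ^ 2 * ‖z‖ ^ 2 := by nlinarith [h4, h3]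
    rcases eq_or_lt_of_le h0 with h6 | h6
    · nlinarith [sq_nonneg ‖z‖]
    · nlinarith [h5, h6]
  refine ⟨⟨?_, hf_lsc.comp L.continuous⟩, ?_⟩
  · refine ⟨convex_univ, fun x _ y _ a b ha hb hab => ?_⟩
    have := hf_conv.2 (mem_univ (L x)) (mem_univ (L y)) ha hb hab
    simpa [map_add, map_smul] using this
  · intro x p hp
    set y₀ := x + ν⁻¹ • L.adjoint (p - L x) with hy₀
    have hLy₀ : L y₀ = p := by
      rw [hy₀, map_add, map_smul, hL, smul_smul, inv_mul_cancel₀ hν.ne', one_smul]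
      abel
    rw [isMinOn_univ_iff] at hp ⊢
    intro y
    have key := hp (L y)
    have hdist : ‖y₀ - x‖ ^ 2 = ν⁻¹ * ‖p - L x‖ ^ 2 := by
      have : y₀ - x = ν⁻¹ • L.adjoint (p - L x) := by rw [hy₀]; abel
      rw [this, norm_smul, mul_pow, hadj]
      simp [abs_of_pos (inv_pos.mpr hν)]
      field_simp
    have hLyx : ‖L y - L x‖ ^ 2 ≤ ν * ‖y - x‖ ^ 2 := by
      have := hLle (y - x)
      rwa [map_sub] at this
    have hνinv : (0:ℝ) < ν⁻¹ := inv_pos.mpr hν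
    simp only [hLy₀, hdist]
    have hν' : ν ≠ 0 := hν.ne'
    have hid : ν * (ν⁻¹ * ‖p - L x‖ ^ 2) = ‖p - L x‖ ^ 2 := by field_simp
    have hfin : ν * (1/2 * (ν⁻¹ * ‖p - L x‖ ^ 2) + f p) ≤ ν * (1/2 * ‖y - x‖ ^ 2 + f (L y)) := by
      nlinarith [key, hLyx, hid]
    exact le_of_mul_le_mul_left hfin hν
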